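/- For every j ∈ ℤ, the second differences of the mid-time convolutions satisfy |A^{½}_{j+3/2} − 2·A^{½}_{j+1/2} + A^{½}_{j−1/2}| ≤ Δx²·(sup |μ''|)·(1 + θ)·(1 + λ·L)·m. -/

import Mathlib

open MeasureTheory

noncomputable section

/-- minmod limiter of three arguments. -/
def minmod3 (a b c : ℝ) : ℝ :=
  if 0 < a ∧ 0 < b ∧ 0 < c then min a (min b c)
  else if a < 0 ∧ b < 0 ∧ c < 0 then max a (max b c)
  else 0

/-- MUSCL slopes `σ_j = 2θ·minmod(ρ_j − ρ_{j−1}, (ρ_{j+1} − ρ_{j−1})/2, ρ_{j+1} − ρ_j)`. -/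
def slp (θ : ℝ) (ρ : ℤ → ℝ) (j : ℤ) : ℝ :=
  2 * θ * minmod3 (ρ j - ρ (j - 1)) ((ρ (j + 1) - ρ (j - 1)) / 2) (ρ (j + 1) - ρ j)

/-- left interface value `ρ⁻_{j+1/2} = ρ_j + σ_j/2`. -/
def intL (θ : ℝ) (ρ : ℤ → ℝ) (j : ℤ) : ℝ := ρ j + slp θ ρ j / 2

/-- right interface value `ρ⁺_{j−1/2} = ρ_j − σ_j/2`. -/
def intR (θ : ℝ) (ρ : ℤ → ℝ) (j : ℤ) : ℝ := ρ j - slp θ ρ j / 2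

/-- discrete convolution `A_j = Δx·Σ_l μ((j−l)Δx)·ρ_l`. -/
def Adisc (μ : ℝ → ℝ) (Δx : ℝ) (ρ : ℤ → ℝ) (j : ℤ) : ℝ :=
  Δx * ∑' l : ℤ, μ (((j : ℝ) - (l : ℝ)) * Δx) * ρ l

/-- `s_j = θ·(A_{j+1} − A_{j−1})`. -/
def sdisc (μ : ℝ → ℝ) (θ Δx : ℝ) (ρ : ℤ → ℝ) (j : ℤ) : ℝ :=
  θ * (Adisc μ Δx ρ (j + 1) - Adisc μ Δx ρ (j - 1))

/-- `A⁻_{j+1/2} = A_j + s_j/2`. -/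
def AdiscL (μ : ℝ → ℝ) (θ Δx : ℝ) (ρ : ℤ → ℝ) (j : ℤ) : ℝ :=
  Adisc μ Δx ρ j + sdisc μ θ Δx ρ j / 2

/-- `A⁺_{j−1/2} = A_j − s_j/2`. -/
def AdiscR (μ : ℝ → ℝ) (θ Δx : ℝ) (ρ : ℤ → ℝ) (j : ℤ) : ℝ :=
  Adisc μ Δx ρ j - sdisc μ θ Δx ρ j / 2

/-- mid-time value `ρ^{½,−}_{j+1/2}`. -/
def midL (f : ℝ → ℝ → ℝ) (μ : ℝ → ℝ) (θ lam Δx : ℝ) (ρ : ℤ → ℝ) (j : ℤ) : ℝ :=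
  intL θ ρ j - lam / 2 *
    (f (intL θ ρ j) (AdiscL μ θ Δx ρ j) - f (intR θ ρ j) (AdiscR μ θ Δx ρ j))

/-- mid-time value `ρ^{½,+}_{j−1/2}`. -/
def midR (f : ℝ → ℝ → ℝ) (μ : ℝ → ℝ) (θ lam Δx : ℝ) (ρ : ℤ → ℝ) (j : ℤ) : ℝ :=
  intR θ ρ j - lam / 2 *
    (f (intL θ ρ j) (AdiscL μ θ Δx ρ j) - f (intR θ ρ j) (AdiscR μ θ Δx ρ j))

/-- mid-time convolution `A^{½}_{j+1/2}`. -/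
def Amid (f : ℝ → ℝ → ℝ) (μ : ℝ → ℝ) (θ lam Δx : ℝ) (ρ : ℤ → ℝ) (j : ℤ) : ℝ :=
  Δx / 2 * ∑' l : ℤ,
    (μ (((j : ℝ) + 1 - (l : ℝ)) * Δx) * midR f μ θ lam Δx ρ l +
     μ (((j : ℝ) - (l : ℝ)) * Δx) * midL f μ θ lam Δx ρ l)

/-- Lax–Friedrichs type numerical flux `F(u,v,A)`. -/
def numFlux (f : ℝ → ℝ → ℝ) (α lam u v A : ℝ) : ℝ :=
  (f u A + f v A) / 2 - α * (v - u) / (2 * lam)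

/-- MUSCL–Hancock update `ρ'_j`. -/
def mhUpdate (f : ℝ → ℝ → ℝ) (μ : ℝ → ℝ) (θ α lam Δx : ℝ) (ρ : ℤ → ℝ) (j : ℤ) : ℝ :=
  ρ j - lam *
    (numFlux f α lam (midL f μ θ lam Δx ρ j) (midR f μ θ lam Δx ρ (j + 1))
        (Amid f μ θ lam Δx ρ j) -
     numFlux f α lam (midL f μ θ lam Δx ρ (j - 1)) (midR f μ θ lam Δx ρ j)
        (Amid f μ θ lam Δx ρ (j - 1)))

set_option maxHeartbeats 1000000

/-- second-difference bound on the mid-time convolutions. -/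
theorem stmt18 (f : ℝ → ℝ → ℝ) (μ : ℝ → ℝ) (Δx Δt lam θ L Cμ'' : ℝ)
    (hΔx : 0 < Δx) (hΔt : 0 < Δt) (hlam : lam = Δt / Δx)
    (hθ0 : 0 ≤ θ) (hθ1 : θ ≤ 1 / 2)
    (hf : ContDiff ℝ 2 (Function.uncurry f)) (hf0 : ∀ A : ℝ, f 0 A = 0)
    (hL : ∀ r A : ℝ, |deriv (fun x => f x A) r| ≤ L)
    (hμ : ContDiff ℝ 2 μ) (hμc : HasCompactSupport μ)
    (hCμ'' : ∀ x : ℝ, |iteratedDeriv 2 μ x| ≤ Cμ'')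
    (ρ : ℤ → ℝ) (hρ : ∀ j : ℤ, 0 ≤ ρ j) (hsum : Summable ρ) (j : ℤ) :
    |Amid f μ θ lam Δx ρ (j + 1) - 2 * Amid f μ θ lam Δx ρ j +
        Amid f μ θ lam Δx ρ (j - 1)| ≤
      Δx ^ 2 * Cμ'' * (1 + θ) * (1 + lam * L) * (Δx * ∑' l : ℤ, ρ l) := by
  -- basic positivity facts
  have hC0 : 0 ≤ Cμ'' := le_trans (abs_nonneg _) (hCμ'' 0)
  have hL0 : 0 ≤ L := le_trans (abs_nonneg _) (hL 0 0)
  have hlam0 : 0 < lam := by rw [hlam]; positivity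
  have tri : ∀ a b : ℝ, |a - b| ≤ |a| + |b| := fun a b => by
    rw [sub_eq_add_neg]
    exact (abs_add_le _ _).trans (by rw [abs_neg])
  -- regularity of μ
  have hμd : Differentiable ℝ μ := hμ.differentiable (by norm_num)
  have h2eq : (2 : WithTop ℕ∞) = 1 + 1 := by norm_num
  have hμ2 : ContDiff ℝ 1 (deriv μ) := by
    have h2 : ContDiff ℝ ((1 : WithTop ℕ∞) + 1) μ := by rw [← h2eq]; exact hμ
    exact (contDiff_succ_iff_deriv.mp h2).2.2
  have hdd : Differentiable ℝ (deriv μ) := hμ2.differentiable one_ne_zero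
  have hdc : Continuous (deriv μ) := hμ2.continuous
  -- Lipschitz bound for deriv μ
  have hlip : ∀ a b : ℝ, |deriv μ a - deriv μ b| ≤ Cμ'' * |a - b| := by
    intro a b
    have hit : deriv (deriv μ) = iteratedDeriv 2 μ := by
      rw [show (2 : ℕ) = 1 + 1 from rfl, iteratedDeriv_succ, iteratedDeriv_one]
    have := Convex.norm_image_sub_le_of_norm_deriv_le (f := deriv μ) (s := Set.univ)
      (fun x _ => hdd.differentiableAt)
      (fun x _ => by rw [hit]; simpa [Real.norm_eq_abs] using hCμ'' x)
      convex_univ (Set.mem_univ b) (Set.mem_univ a)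
    simpa [Real.norm_eq_abs] using this
  -- second difference bound for μ
  have key : ∀ a : ℝ, (∫ t in (0:ℝ)..Δx, deriv μ (a + t)) = μ (a + Δx) - μ a := by
    intro a
    rw [intervalIntegral.integral_comp_add_left (fun u => deriv μ u) a, add_zero]
    exact intervalIntegral.integral_deriv_eq_sub (fun t _ => hμd.differentiableAt)
      (hdc.intervalIntegrable _ _)
  have hA : ∀ x : ℝ, |μ (x + Δx) - 2 * μ x + μ (x - Δx)| ≤ Δx ^ 2 * Cμ'' := by
    intro x
    have hc1 : Continuous fun t : ℝ => deriv μ (x + t) :=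
      hdc.comp (continuous_const.add continuous_id)
    have hc2 : Continuous fun t : ℝ => deriv μ (x - Δx + t) :=
      hdc.comp (continuous_const.add continuous_id)
    have h2 : μ (x + Δx) - 2 * μ x + μ (x - Δx)
        = ∫ t in (0:ℝ)..Δx, (deriv μ (x + t) - deriv μ (x - Δx + t)) := by
      rw [intervalIntegral.integral_sub (hc1.intervalIntegrable _ _)
        (hc2.intervalIntegrable _ _), key x, key (x - Δx),
        show x - Δx + Δx = x by ring]
      ring
    rw [h2]
    have hb := intervalIntegral.norm_integral_le_of_norm_le_const
      (C := Cμ'' * Δx) (a := (0:ℝ)) (b := Δx)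
      (f := fun t => deriv μ (x + t) - deriv μ (x - Δx + t))
      (by
        intro t _
        have := hlip (x + t) (x - Δx + t)
        rw [show x + t - (x - Δx + t) = Δx by ring, abs_of_pos hΔx] at this
        simpa [Real.norm_eq_abs] using this)
    rw [Real.norm_eq_abs] at hb
    calc |∫ t in (0:ℝ)..Δx, (deriv μ (x + t) - deriv μ (x - Δx + t))|
        ≤ Cμ'' * Δx * |Δx - 0| := hb
      _ = Δx ^ 2 * Cμ'' := by rw [sub_zero, abs_of_pos hΔx]; ring
  -- |f r A| ≤ L * |r|
  have hfd : Differentiable ℝ (Function.uncurry f) := hf.differentiable (by norm_num)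
  have hB : ∀ r A : ℝ, |f r A| ≤ L * |r| := by
    intro r A
    have hdiff : ∀ x : ℝ, DifferentiableAt ℝ (fun x => f x A) x := by
      intro x
      have : (fun x : ℝ => f x A) = Function.uncurry f ∘ fun x : ℝ => (x, A) := rfl
      rw [this]
      exact (hfd.differentiableAt).comp x
        (differentiableAt_id.prodMk (differentiableAt_const A))
    have := Convex.norm_image_sub_le_of_norm_deriv_le (f := fun x => f x A) (s := Set.univ)
      (fun x _ => hdiff x) (fun x _ => by simpa [Real.norm_eq_abs] using hL x A)
      convex_univ (Set.mem_univ 0) (Set.mem_univ r)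
    simpa [hf0 A, Real.norm_eq_abs] using this
  -- interface values: positivity and sum
  have hintsum : ∀ i : ℤ, intL θ ρ i + intR θ ρ i = 2 * ρ i := by
    intro i; unfold intL intR; ring
  have hint : ∀ i : ℤ, 0 ≤ intL θ ρ i ∧ 0 ≤ intR θ ρ i := by
    intro i
    have h0 := hρ i; have h1 := hρ (i - 1); have h2 := hρ (i + 1)
    unfold intL intR slp minmod3
    split_ifs with hc1 hc2
    · obtain ⟨ha, hb, hc⟩ := hc1
      have hm0 : 0 ≤ min (ρ i - ρ (i - 1)) (min ((ρ (i + 1) - ρ (i - 1)) / 2) (ρ (i + 1) - ρ i)) :=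
        le_min ha.le (le_min hb.le hc.le)
      have hma : min (ρ i - ρ (i - 1)) (min ((ρ (i + 1) - ρ (i - 1)) / 2) (ρ (i + 1) - ρ i))
          ≤ ρ i - ρ (i - 1) := min_le_left _ _
      constructor
      · nlinarith [mul_nonneg hθ0 hm0]
      · nlinarith [mul_le_mul_of_nonneg_left hma hθ0,
          mul_le_mul_of_nonneg_right hθ1 (show (0:ℝ) ≤ ρ i - ρ (i-1) from ha.le)]
    · obtain ⟨ha, hb, hc⟩ := hc2
      have hm0 : max (ρ i - ρ (i - 1)) (max ((ρ (i + 1) - ρ (i - 1)) / 2) (ρ (i + 1) - ρ i)) ≤ 0 :=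
        max_le ha.le (max_le hb.le hc.le)
      have hmc : ρ (i + 1) - ρ i
          ≤ max (ρ i - ρ (i - 1)) (max ((ρ (i + 1) - ρ (i - 1)) / 2) (ρ (i + 1) - ρ i)) :=
        le_trans (le_max_right _ _) (le_max_right _ _)
      constructor
      · nlinarith [mul_le_mul_of_nonneg_left hmc hθ0,
          mul_le_mul_of_nonneg_right hθ1 (show (0:ℝ) ≤ ρ i - ρ (i+1) by linarith [hc])]
      · nlinarith [mul_nonpos_of_nonneg_of_nonpos hθ0 hm0]
    · constructor <;> simp <;> linarith
  -- bounds on mid-time values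
  set mR := midR f μ θ lam Δx ρ with hmRdef
  set mL := midL f μ θ lam Δx ρ with hmLdef
  have hmid : ∀ i : ℤ, |mL i| ≤ intL θ ρ i + lam * L * ρ i ∧
      |mR i| ≤ intR θ ρ i + lam * L * ρ i := by
    intro i
    obtain ⟨hiL, hiR⟩ := hint i
    have hfL := hB (intL θ ρ i) (AdiscL μ θ Δx ρ i)
    have hfR := hB (intR θ ρ i) (AdiscR μ θ Δx ρ i)
    rw [abs_of_nonneg hiL] at hfL
    rw [abs_of_nonneg hiR] at hfR
    have hΔf : |f (intL θ ρ i) (AdiscL μ θ Δx ρ i) - f (intR θ ρ i) (AdiscR μ θ Δx ρ i)|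
        ≤ L * (2 * ρ i) := by
      calc |f (intL θ ρ i) (AdiscL μ θ Δx ρ i) - f (intR θ ρ i) (AdiscR μ θ Δx ρ i)|
          ≤ |f (intL θ ρ i) (AdiscL μ θ Δx ρ i)| + |f (intR θ ρ i) (AdiscR μ θ Δx ρ i)| :=
            tri _ _
        _ ≤ L * intL θ ρ i + L * intR θ ρ i := add_le_add hfL hfR
        _ = L * (2 * ρ i) := by rw [← mul_add, hintsum i]
    constructor
    · calc |mL i| ≤ |intL θ ρ i| + |lam / 2 *
            (f (intL θ ρ i) (AdiscL μ θ Δx ρ i) - f (intR θ ρ i) (AdiscR μ θ Δx ρ i))| :=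
          tri _ _
        _ ≤ intL θ ρ i + lam / 2 * (L * (2 * ρ i)) := by
            rw [abs_of_nonneg hiL, abs_mul, abs_of_nonneg (by positivity : (0:ℝ) ≤ lam / 2)]
            exact add_le_add_right (mul_le_mul_of_nonneg_left hΔf (by positivity)) _
        _ = intL θ ρ i + lam * L * ρ i := by ring
    · calc |mR i| ≤ |intR θ ρ i| + |lam / 2 *
            (f (intL θ ρ i) (AdiscL μ θ Δx ρ i) - f (intR θ ρ i) (AdiscR μ θ Δx ρ i))| :=
          tri _ _
        _ ≤ intR θ ρ i + lam / 2 * (L * (2 * ρ i)) := by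
            rw [abs_of_nonneg hiR, abs_mul, abs_of_nonneg (by positivity : (0:ℝ) ≤ lam / 2)]
            exact add_le_add_right (mul_le_mul_of_nonneg_left hΔf (by positivity)) _
        _ = intR θ ρ i + lam * L * ρ i := by ring
  -- summability
  have hsum2 : Summable (fun l => 2 * ρ l) := hsum.mul_left 2
  have hsintL : Summable (fun l => intL θ ρ l) :=
    Summable.of_nonneg_of_le (fun l => (hint l).1)
      (fun l => by have := (hint l).2; have := hintsum l; linarith) hsum2
  have hsintR : Summable (fun l => intR θ ρ l) :=
    Summable.of_nonneg_of_le (fun l => (hint l).2)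
      (fun l => by have := (hint l).1; have := hintsum l; linarith) hsum2
  have hbL : Summable (fun l => intL θ ρ l + lam * L * ρ l) :=
    hsintL.add (hsum.mul_left (lam * L))
  have hbR : Summable (fun l => intR θ ρ l + lam * L * ρ l) :=
    hsintR.add (hsum.mul_left (lam * L))
  have habsL : Summable (fun l => |mL l|) :=
    Summable.of_nonneg_of_le (fun l => abs_nonneg _) (fun l => (hmid l).1) hbL
  have habsR : Summable (fun l => |mR l|) :=
    Summable.of_nonneg_of_le (fun l => abs_nonneg _) (fun l => (hmid l).2) hbR
  obtain ⟨M, hM⟩ := hμ.continuous.bounded_above_of_compact_support hμc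
  set w : ℝ → ℤ → ℝ := fun c l => μ ((c - (l : ℝ)) * Δx) with hwdef
  have hprod : ∀ (g : ℤ → ℝ), Summable (fun l => |g l|) → ∀ c : ℝ,
      Summable (fun l => w c l * g l) := by
    intro g hg c
    apply Summable.of_norm_bounded (hg.mul_left M)
    intro l
    rw [Real.norm_eq_abs, abs_mul]
    exact mul_le_mul_of_nonneg_right (by simpa [Real.norm_eq_abs] using hM _) (abs_nonneg _)
  have hpR := hprod mR habsR
  have hpL := hprod mL habsL
  -- expressing Amid
  have hAe : ∀ i : ℤ, Amid f μ θ lam Δx ρ i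
      = Δx / 2 * ((∑' l, w ((i : ℝ) + 1) l * mR l) + ∑' l, w (i : ℝ) l * mL l) := by
    intro i
    rw [Amid, Summable.tsum_add (hpR _) (hpL _)]
  have hr1 : (∑' l, w (((j + 1 : ℤ) : ℝ) + 1) l * mR l) = ∑' l, w ((j : ℝ) + 2) l * mR l :=
    tsum_congr fun l => by simp only [hwdef]; push_cast; ring_nf
  have hr2 : (∑' l, w (((j + 1 : ℤ) : ℝ)) l * mL l) = ∑' l, w ((j : ℝ) + 1) l * mL l :=
    tsum_congr fun l => by simp only [hwdef]; push_cast; ring_nf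
  have hr3 : (∑' l, w (((j - 1 : ℤ) : ℝ) + 1) l * mR l) = ∑' l, w ((j : ℝ)) l * mR l :=
    tsum_congr fun l => by simp only [hwdef]; push_cast; ring_nf
  have hr4 : (∑' l, w (((j - 1 : ℤ) : ℝ)) l * mL l) = ∑' l, w ((j : ℝ) - 1) l * mL l :=
    tsum_congr fun l => by simp only [hwdef]; push_cast; ring_nf
  -- combination lemma
  have hcomb : ∀ (a b c : ℝ) (g : ℤ → ℝ), Summable (fun l => |g l|) →
      ((∑' l, w a l * g l) - 2 * (∑' l, w b l * g l) + ∑' l, w c l * g l)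
        = ∑' l, (w a l - 2 * w b l + w c l) * g l := by
    intro a b c g hg
    rw [← tsum_mul_left (a := (2:ℝ)),
      ← Summable.tsum_sub (hprod g hg a) ((hprod g hg b).mul_left 2),
      ← Summable.tsum_add (((hprod g hg a).sub ((hprod g hg b).mul_left 2))) (hprod g hg c)]
    exact tsum_congr fun l => by ring
  -- the main identity
  have hmain : Amid f μ θ lam Δx ρ (j + 1) - 2 * Amid f μ θ lam Δx ρ j +
      Amid f μ θ lam Δx ρ (j - 1)
      = Δx / 2 * ((∑' l, (w ((j:ℝ)+2) l - 2 * w ((j:ℝ)+1) l + w ((j:ℝ)) l) * mR l)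
          + ∑' l, (w ((j:ℝ)+1) l - 2 * w ((j:ℝ)) l + w ((j:ℝ)-1) l) * mL l) := by
    rw [hAe (j+1), hAe j, hAe (j-1)]
    rw [hr1, hr2, hr3, hr4, ← hcomb _ _ _ mR habsR, ← hcomb _ _ _ mL habsL]
    ring
  -- pointwise bounds on the second differences of w
  have hwR : ∀ l : ℤ, |w ((j:ℝ)+2) l - 2 * w ((j:ℝ)+1) l + w ((j:ℝ)) l| ≤ Δx ^ 2 * Cμ'' := by
    intro l
    have := hA (((j:ℝ) + 1 - (l:ℝ)) * Δx)
    have e1 : ((j:ℝ) + 2 - (l:ℝ)) * Δx = ((j:ℝ) + 1 - (l:ℝ)) * Δx + Δx := by ring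
    have e2 : ((j:ℝ) - (l:ℝ)) * Δx = ((j:ℝ) + 1 - (l:ℝ)) * Δx - Δx := by ring
    simp only [hwdef]
    rw [e1, e2]
    exact this
  have hwL : ∀ l : ℤ, |w ((j:ℝ)+1) l - 2 * w ((j:ℝ)) l + w ((j:ℝ)-1) l| ≤ Δx ^ 2 * Cμ'' := by
    intro l
    have := hA (((j:ℝ) - (l:ℝ)) * Δx)
    have e1 : ((j:ℝ) + 1 - (l:ℝ)) * Δx = ((j:ℝ) - (l:ℝ)) * Δx + Δx := by ring
    have e2 : ((j:ℝ) - 1 - (l:ℝ)) * Δx = ((j:ℝ) - (l:ℝ)) * Δx - Δx := by ring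
    simp only [hwdef]
    rw [e1, e2]
    exact this
  -- bound each tsum
  have hDC : 0 ≤ Δx ^ 2 * Cμ'' := by positivity
  have hboundgen : ∀ (u : ℤ → ℝ) (g : ℤ → ℝ) (b : ℤ → ℝ),
      Summable (fun l => |g l|) → Summable b →
      (∀ l, |u l| ≤ Δx ^ 2 * Cμ'') → (∀ l, |g l| ≤ b l) →
      |∑' l, u l * g l| ≤ Δx ^ 2 * Cμ'' * ∑' l, b l := by
    intro u g b hg hb hu hgb
    have habs : Summable (fun l => |u l * g l|) := by
      apply Summable.of_nonneg_of_le (fun l => abs_nonneg _) _ (hg.mul_left (Δx ^ 2 * Cμ''))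
      intro l
      rw [abs_mul]
      exact mul_le_mul_of_nonneg_right (hu l) (abs_nonneg _)
    have h1 : |∑' l, u l * g l| ≤ ∑' l, |u l * g l| := by
      simpa only [Real.norm_eq_abs] using norm_tsum_le_tsum_norm (f := fun l => u l * g l)
        (by simpa only [Real.norm_eq_abs] using habs)
    have h2 : (∑' l, |u l * g l|) ≤ ∑' l, Δx ^ 2 * Cμ'' * b l := by
      apply Summable.tsum_le_tsum _ habs (hb.mul_left _)
      intro l
      rw [abs_mul]
      exact mul_le_mul (hu l) (hgb l) (abs_nonneg _) hDC
    calc |∑' l, u l * g l| ≤ ∑' l, |u l * g l| := h1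
      _ ≤ ∑' l, Δx ^ 2 * Cμ'' * b l := h2
      _ = Δx ^ 2 * Cμ'' * ∑' l, b l := tsum_mul_left
  have hTR := hboundgen _ mR (fun l => intR θ ρ l + lam * L * ρ l) habsR hbR hwR
    (fun l => (hmid l).2)
  have hTL := hboundgen _ mL (fun l => intL θ ρ l + lam * L * ρ l) habsL hbL hwL
    (fun l => (hmid l).1)
  -- sum of the bounds
  have hsumbR : (∑' l, (intR θ ρ l + lam * L * ρ l)) + ∑' l, (intL θ ρ l + lam * L * ρ l)
      = 2 * (1 + lam * L) * ∑' l, ρ l := by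
    rw [← Summable.tsum_add hbR hbL, ← tsum_mul_left]
    exact tsum_congr fun l => by
      have := hintsum l; linear_combination this
  -- putting everything together
  have hS0 : 0 ≤ ∑' l, ρ l := tsum_nonneg hρ
  rw [hmain]
  have habs2 : |Δx / 2 * ((∑' l, (w ((j:ℝ)+2) l - 2 * w ((j:ℝ)+1) l + w ((j:ℝ)) l) * mR l)
      + ∑' l, (w ((j:ℝ)+1) l - 2 * w ((j:ℝ)) l + w ((j:ℝ)-1) l) * mL l)|
      ≤ Δx / 2 * (Δx ^ 2 * Cμ'' * (2 * (1 + lam * L) * ∑' l, ρ l)) := by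
    rw [abs_mul, abs_of_pos (by positivity : (0:ℝ) < Δx / 2)]
    apply mul_le_mul_of_nonneg_left _ (by positivity)
    calc |(∑' l, (w ((j:ℝ)+2) l - 2 * w ((j:ℝ)+1) l + w ((j:ℝ)) l) * mR l)
        + ∑' l, (w ((j:ℝ)+1) l - 2 * w ((j:ℝ)) l + w ((j:ℝ)-1) l) * mL l|
        ≤ |∑' l, (w ((j:ℝ)+2) l - 2 * w ((j:ℝ)+1) l + w ((j:ℝ)) l) * mR l|
          + |∑' l, (w ((j:ℝ)+1) l - 2 * w ((j:ℝ)) l + w ((j:ℝ)-1) l) * mL l| := abs_add_le _ _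
      _ ≤ Δx ^ 2 * Cμ'' * (∑' l, (intR θ ρ l + lam * L * ρ l))
          + Δx ^ 2 * Cμ'' * (∑' l, (intL θ ρ l + lam * L * ρ l)) := add_le_add hTR hTL
      _ = Δx ^ 2 * Cμ'' * (2 * (1 + lam * L) * ∑' l, ρ l) := by
          rw [← mul_add, hsumbR]
  refine habs2.trans ?_
  have h1L : (0:ℝ) ≤ 1 + lam * L := by positivity
  nlinarith [mul_nonneg (mul_nonneg (mul_nonneg (mul_nonneg hθ0 (pow_pos hΔx 3).le) hC0) h1L) hS0]
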